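/- Let S be a finitely generated submonoid of ℕ^d that is irreducible and has a Frobenius element f ∈ F(S). Then either PF(S) = {f}, or there exists g ∈ ℕ^d with 2g = f and PF(S) = {f, g} (that is, PF(S) = {f, f/2}). -/
import Mathlib


open scoped BigOperators

/-- The natural cast of an element of `ℕ^d` into `ℚ^d`. -/
def toQ {d : ℕ} (x : Fin d → ℕ) : Fin d → ℚ := fun i => (x i : ℚ)

/-- The natural cast of an element of `ℕ^d` into `ℤ^d`. -/
def natToZ {d : ℕ} (x : Fin d → ℕ) : Fin d → ℤ := fun i => (x i : ℤ)

/-- The cone `pos(S)` of a submonoid `S ⊆ ℕ^d`: all nonnegative rational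
combinations of elements of `S`, as a subset of `ℚ^d`. -/
def posCone {d : ℕ} (S : AddSubmonoid (Fin d → ℕ)) : Set (Fin d → ℚ) :=
  {q | ∃ (k : ℕ) (c : Fin k → ℚ) (s : Fin k → (Fin d → ℕ)),
    (∀ i, 0 ≤ c i) ∧ (∀ i, s i ∈ S) ∧ q = ∑ i, c i • toQ (s i)}

/-- The gap set `H(S) = (pos(S) \ S) ∩ ℕ^d`. -/
def gaps {d : ℕ} (S : AddSubmonoid (Fin d → ℕ)) : Set (Fin d → ℕ) :=
  {x | toQ x ∈ posCone S ∧ x ∉ S}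

/-- The set of pseudo-Frobenius elements of `S`. -/
def PF {d : ℕ} (S : AddSubmonoid (Fin d → ℕ)) : Set (Fin d → ℕ) :=
  {a | a ∈ gaps S ∧ ∀ s ∈ S, s ≠ 0 → a + s ∈ S}

/-- A term order on `ℕ^d`: a total order compatible with addition for which
`0` is the least element. -/
def IsTermOrder {d : ℕ} (r : (Fin d → ℕ) → (Fin d → ℕ) → Prop) : Prop :=
  (∀ a b, r a b ∨ r b a) ∧ (∀ a b, r a b → r b a → a = b) ∧
    (∀ a b c, r a b → r b c → r a c) ∧ (∀ a, r 0 a) ∧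
    (∀ a b c, r a b → r (a + c) (b + c))

/-- The set of Frobenius elements of `S`: maxima of `H(S)` for some term order. -/
def FrobSet {d : ℕ} (S : AddSubmonoid (Fin d → ℕ)) : Set (Fin d → ℕ) :=
  {f | f ∈ gaps S ∧ ∃ r, IsTermOrder r ∧ ∀ h ∈ gaps S, r h f}

/-- The Apéry set of `S` relative to `b`:
`Ap(S,b) = {a ∈ S : a - b ∈ pos(S) \ S}`, the difference taken in `ℚ^d`. -/
def Apery {d : ℕ} (S : AddSubmonoid (Fin d → ℕ)) (b : Fin d → ℕ) : Set (Fin d → ℕ) :=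
  {a | a ∈ S ∧ (toQ a - toQ b) ∈ posCone S ∧ ¬ ∃ s ∈ S, toQ s = toQ a - toQ b}

/-- The partial order `≼_S`: `x ≼_S y` iff `y - x ∈ S`. -/
def leS {d : ℕ} (S : AddSubmonoid (Fin d → ℕ)) (x y : Fin d → ℕ) : Prop :=
  ∃ s ∈ S, x + s = y

/-- `a` is a `≼_S`-maximal element of `X`. -/
def MaximalIn {d : ℕ} (S : AddSubmonoid (Fin d → ℕ)) (X : Set (Fin d → ℕ))
    (a : Fin d → ℕ) : Prop :=
  a ∈ X ∧ ∀ a' ∈ X, a' ≠ a → ¬ leS S a a'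

/-- `S` is irreducible: it is not the intersection of two submonoids of `ℕ^d`
each properly containing it. -/
def IrreducibleMonoid {d : ℕ} (S : AddSubmonoid (Fin d → ℕ)) : Prop :=
  ¬ ∃ S₁ S₂ : AddSubmonoid (Fin d → ℕ), S < S₁ ∧ S < S₂ ∧
    (S : Set (Fin d → ℕ)) = (S₁ : Set (Fin d → ℕ)) ∩ (S₂ : Set (Fin d → ℕ))

/-- The multiplicity of `S`: componentwise infimum of `S \ {0}`. -/
noncomputable def mult {d : ℕ} (S : AddSubmonoid (Fin d → ℕ)) : Fin d → ℕ :=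
  fun i => sInf {n | ∃ s ∈ S, s ≠ 0 ∧ s i = n}

/-- `S` is a PI-monoid: `S = (a + T) ∪ {0}` for some submonoid `T` of `ℕ^d`
and some `a ∈ T \ {0}`. -/
def IsPIMonoid {d : ℕ} (S : AddSubmonoid (Fin d → ℕ)) : Prop :=
  ∃ (T : AddSubmonoid (Fin d → ℕ)) (a : Fin d → ℕ), a ∈ T ∧ a ≠ 0 ∧
    (S : Set (Fin d → ℕ)) = {x | ∃ t ∈ T, x = a + t} ∪ {0}

/-- `G` is a minimal system of generators of `S`. -/
def IsMinimalGenSet {d : ℕ} (S : AddSubmonoid (Fin d → ℕ)) (G : Set (Fin d → ℕ)) : Prop :=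
  AddSubmonoid.closure G = S ∧ ∀ G' ⊂ G, AddSubmonoid.closure G' ≠ S

section Aux

variable {d : ℕ} {S : AddSubmonoid (Fin d → ℕ)}

lemma toQ_add (x y : Fin d → ℕ) : toQ (x + y) = toQ x + toQ y := by
  funext i; simp [toQ]

lemma toQ_nsmul (k : ℕ) (x : Fin d → ℕ) : toQ (k • x) = (k : ℚ) • toQ x := by
  funext i; simp [toQ]

lemma mem_posCone_of_mem {s : Fin d → ℕ} (hs : s ∈ S) : toQ s ∈ posCone S :=
  ⟨1, fun _ => 1, fun _ => s, fun _ => zero_le_one, fun _ => hs, by simp⟩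

lemma posCone_add {p q : Fin d → ℚ} (hp : p ∈ posCone S) (hq : q ∈ posCone S) :
    p + q ∈ posCone S := by
  obtain ⟨k1, c1, s1, hc1, hs1, rfl⟩ := hp
  obtain ⟨k2, c2, s2, hc2, hs2, rfl⟩ := hq
  refine ⟨k1 + k2, Fin.append c1 c2, Fin.append s1 s2, ?_, ?_, ?_⟩
  · intro i
    induction i using Fin.addCases with
    | left j => simpa [Fin.append_left] using hc1 j
    | right j => simpa [Fin.append_right] using hc2 j
  · intro i
    induction i using Fin.addCases with
    | left j => simpa [Fin.append_left] using hs1 j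
    | right j => simpa [Fin.append_right] using hs2 j
  · rw [Fin.sum_univ_add]
    simp [Fin.append_left, Fin.append_right]

lemma posCone_smul {q : Fin d → ℚ} (c : ℚ) (hc : 0 ≤ c) (hq : q ∈ posCone S) :
    c • q ∈ posCone S := by
  obtain ⟨k, co, s, h1, h2, h3⟩ := hq
  refine ⟨k, fun i => c * co i, s, fun i => mul_nonneg hc (h1 i), h2, ?_⟩
  rw [h3, Finset.smul_sum]
  simp [smul_smul]

lemma pi_add_eq_zero {x y : Fin d → ℕ} : x + y = 0 ↔ x = 0 ∧ y = 0 := by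
  constructor
  · intro h
    constructor <;> (funext i; have := congrFun h i; simp [Pi.add_apply] at this ⊢; omega)
  · rintro ⟨rfl, rfl⟩; simp

lemma pf_step {x : Fin d → ℕ} (hx : ∀ s ∈ S, s ≠ 0 → x + s ∈ S) :
    ∀ (k : ℕ) (s : Fin d → ℕ), s ∈ S → s ≠ 0 → k • x + s ∈ S := by
  intro k
  induction k with
  | zero => intro s hs _; simpa using hs
  | succ n ih =>
      intro s hs hs0
      have h1 : x + s ∈ S := hx s hs hs0
      have h2 : x + s ≠ 0 := by
        intro h
        exact hs0 (pi_add_eq_zero.mp h).2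
      have h3 := ih (x + s) h1 h2
      have e : (n + 1) • x + s = n • x + (x + s) := by
        rw [succ_nsmul]; ring
      rwa [e]

lemma frob_mem_pf {f : Fin d → ℕ} (hf : f ∈ FrobSet S) : f ∈ PF S := by
  obtain ⟨hgap, r, hr, hmax⟩ := hf
  refine ⟨hgap, ?_⟩
  intro s hs hs0
  by_contra hns
  have hfs : f + s ∈ gaps S :=
    ⟨by rw [toQ_add]; exact posCone_add hgap.1 (mem_posCone_of_mem hs), hns⟩
  have h1 : r (f + s) f := hmax _ hfs
  have h2 : r f (f + s) := by
    have := hr.2.2.2.2 0 s f (hr.2.2.2.1 s)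
    simpa [add_comm] using this
  have heq : f = f + s := hr.2.1 _ _ h2 h1
  exact hs0 (add_eq_left.mp heq.symm)

lemma two_f_mem {f : Fin d → ℕ} (hf : f ∈ FrobSet S) : f + f ∈ S := by
  obtain ⟨hgap, r, hr, hmax⟩ := hf
  by_contra h
  have hgap2 : f + f ∈ gaps S := ⟨by rw [toQ_add]; exact posCone_add hgap.1 hgap.1, h⟩
  have h1 := hmax _ hgap2
  have h2 : r f (f + f) := by
    have := hr.2.2.2.2 0 f f (hr.2.2.2.1 f)
    simpa [add_comm] using this
  have heq : f = f + f := hr.2.1 _ _ h2 h1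
  have hf0 : f = 0 := add_eq_left.mp heq.symm
  exact hgap.2 (hf0 ▸ S.zero_mem)

lemma frob_mem_of_lt (hirr : IrreducibleMonoid S) {f : Fin d → ℕ} (hf : f ∈ FrobSet S)
    {T : AddSubmonoid (Fin d → ℕ)} (hT : S < T) : f ∈ T := by
  by_contra hfT
  have hfPF := frob_mem_pf hf
  have h2f := two_f_mem hf
  have hfS : f ∉ S := hf.1.2
  have hf0 : f ≠ 0 := fun h => hfS (h ▸ S.zero_mem)
  have hff0 : f + f ≠ 0 := fun h => hf0 (pi_add_eq_zero.mp h).1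
  set S₂ := S ⊔ AddSubmonoid.closure {f} with hS₂def
  have hfS₂ : f ∈ S₂ := AddSubmonoid.mem_sup_right (AddSubmonoid.subset_closure rfl)
  have hS₂lt : S < S₂ := lt_of_le_of_ne le_sup_left (fun h => hfS (by rw [h]; exact hfS₂))
  apply hirr
  refine ⟨T, S₂, hT, hS₂lt, ?_⟩
  apply Set.Subset.antisymm
  · intro y hy
    exact ⟨hT.le hy, AddSubmonoid.mem_sup_left hy⟩
  · rintro y ⟨hyT, hyS₂⟩
    obtain ⟨s, hs, z, hz, rfl⟩ := AddSubmonoid.mem_sup.mp hyS₂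
    obtain ⟨n, rfl⟩ := AddSubmonoid.mem_closure_singleton.mp hz
    by_cases hs0 : s = 0
    · subst hs0
      match n with
      | 0 => simpa using S.zero_mem
      | 1 => exact absurd (by simpa using hyT) hfT
      | (n + 2) =>
          have e : (0 : Fin d → ℕ) + (n + 2) • f = n • f + (f + f) := by ring
          rw [e]
          exact pf_step hfPF.2 n (f + f) h2f hff0
    · have h4 := pf_step hfPF.2 n s hs hs0
      simpa [add_comm] using h4

lemma exists_pow (hirr : IrreducibleMonoid S) {f : Fin d → ℕ} (hf : f ∈ FrobSet S)
    {x : Fin d → ℕ} (hx : x ∈ PF S) (hxf : x ≠ f) : ∃ k, 2 ≤ k ∧ f = k • x := by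
  have hfS : f ∉ S := hf.1.2
  have hxS : x ∉ S := hx.1.2
  have hxT : x ∈ S ⊔ AddSubmonoid.closure {x} :=
    AddSubmonoid.mem_sup_right (AddSubmonoid.subset_closure rfl)
  have hlt : S < S ⊔ AddSubmonoid.closure {x} :=
    lt_of_le_of_ne le_sup_left (fun h => hxS (by rw [h]; exact hxT))
  have hfT := frob_mem_of_lt hirr hf hlt
  obtain ⟨s, hs, z, hz, hsum⟩ := AddSubmonoid.mem_sup.mp hfT
  obtain ⟨k, rfl⟩ := AddSubmonoid.mem_closure_singleton.mp hz
  by_cases hs0 : s = 0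
  · subst hs0
    match k with
    | 0 =>
        exfalso
        apply hfS
        have : f = 0 := by simpa using hsum.symm
        exact this ▸ S.zero_mem
    | 1 => exact absurd (by simpa using hsum) hxf
    | (k + 2) => exact ⟨k + 2, by omega, by simpa using hsum.symm⟩
  · exfalso
    apply hfS
    rw [← hsum]
    have h4 := pf_step hx.2 k s hs hs0
    simpa [add_comm] using h4

lemma pf_half (hirr : IrreducibleMonoid S) {f : Fin d → ℕ} (hf : f ∈ FrobSet S)
    {x : Fin d → ℕ} (hx : x ∈ PF S) (hxf : x ≠ f) : x + x = f := by
  obtain ⟨k, hk2, hfk⟩ := exists_pow hirr hf hx hxf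
  obtain ⟨m, rfl⟩ : ∃ m, k = m + 2 := ⟨k - 2, by omega⟩
  have hfS : f ∉ S := hf.1.2
  have hxS : x ∉ S := hx.1.2
  have hx0 : x ≠ 0 := fun h => hxS (h ▸ S.zero_mem)
  set z := (m + 1) • x with hzdef
  have hz0 : z ≠ 0 := by
    intro h
    apply hx0
    funext i
    have := congrFun h i
    simp [hzdef, Pi.smul_apply] at this ⊢
    omega
  have hzS : z ∉ S := by
    intro hzS
    apply hfS
    have e : (m + 2) • x = 1 • x + (m + 1) • x := by ring
    rw [hfk, e]
    exact pf_step hx.2 1 z hzS hz0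
  have hzgap : z ∈ gaps S := by
    refine ⟨?_, hzS⟩
    rw [hzdef, toQ_nsmul]
    exact posCone_smul _ (by positivity) hx.1.1
  have hzPF : z ∈ PF S := by
    refine ⟨hzgap, ?_⟩
    intro s hs hs0
    have h1 : x + s ∈ S := hx.2 s hs hs0
    have h2 : x + s ≠ 0 := fun h => hs0 (pi_add_eq_zero.mp h).2
    have e : (m + 1) • x + s = m • x + (x + s) := by rw [succ_nsmul]; ring
    rw [hzdef, e]
    exact pf_step hx.2 m (x + s) h1 h2
  have hznef : z ≠ f := by
    intro h
    apply hx0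
    have e : f = z + x := by rw [hfk, hzdef]; ring
    rw [h] at e
    exact (add_eq_left.mp e.symm)
  obtain ⟨mm, hmm2, hfz⟩ := exists_pow hirr hf hzPF hznef
  have heq : (m + 2) • x = (mm * (m + 1)) • x := by
    rw [← hfk, hfz, hzdef, smul_smul]
  obtain ⟨i, hi⟩ : ∃ i, x i ≠ 0 := by
    by_contra hc
    push_neg at hc
    exact hx0 (funext hc)
  have e1 : (m + 2) * x i = (mm * (m + 1)) * x i := by
    have := congrFun heq i
    simpa [Pi.smul_apply] using this
  have e2 : m + 2 = mm * (m + 1) := Nat.eq_of_mul_eq_mul_right (Nat.pos_of_ne_zero hi) e1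
  have e3 : 2 * (m + 1) ≤ mm * (m + 1) := Nat.mul_le_mul hmm2 le_rfl
  rw [← e2] at e3
  have hm0 : m = 0 := by omega
  subst hm0
  rw [hfk]
  ring

end Aux

/-- If `S` is a finitely generated irreducible submonoid of
`ℕ^d` with Frobenius element `f`, then `PF(S) = {f}` or `PF(S) = {f, f/2}`. -/
theorem irreducible_pf {d : ℕ} (S : AddSubmonoid (Fin d → ℕ)) (hfg : S.FG)
    (hirr : IrreducibleMonoid S) (f : Fin d → ℕ) (hf : f ∈ FrobSet S) :
    PF S = {f} ∨ ∃ g : Fin d → ℕ, g + g = f ∧ PF S = {f, g} := by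
  have hfPF : f ∈ PF S := frob_mem_pf hf
  by_cases h : ∀ y ∈ PF S, y = f
  · left
    ext y
    simp only [Set.mem_singleton_iff]
    exact ⟨fun hy => h y hy, fun hy => hy ▸ hfPF⟩
  · push_neg at h
    obtain ⟨x, hx, hxf⟩ := h
    right
    refine ⟨x, pf_half hirr hf hx hxf, ?_⟩
    ext y
    simp only [Set.mem_insert_iff, Set.mem_singleton_iff]
    constructor
    · intro hy
      by_cases hyf : y = f
      · exact Or.inl hyf
      · right
        have h1 := pf_half hirr hf hy hyf
        have h2 := pf_half hirr hf hx hxf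
        funext i
        have := congrFun (h1.trans h2.symm) i
        simp [Pi.add_apply] at this
        omega
    · rintro (rfl | rfl)
      · exact hfPF
      · exact hx
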